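/- Let $j : \mathbb{R}^\ell \to \mathbb{R}$ be twice continuously differentiable, $U_{ad} = \{v : a \le v \le b\}$ with $a < b$, and suppose $u^* \in U_{ad}$ satisfies the first-order condition $\nabla j(u^*) \cdot (u - u^*) \ge 0$ for all $u \in U_{ad}$, together with $j''(u^*)(v,v) > 0$ for all $v \in C_{u^*} \setminus \{0\}$. Then there exist $\eta > 0$ and $\delta > 0$ such that $j(u) \ge j(u^*) + \frac{\eta}{4}\|u - u^*\|^2$ for all $u \in U_{ad}$ with $\|u - u^*\| \le \delta$. In particular, $u^*$ is a strict local minimum of $j$ on $U_{ad}$. -/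

import Mathlib

lemma piLp_sum_apply {ℓ : ℕ} (s : Finset (Fin ℓ)) (f : Fin ℓ → EuclideanSpace ℝ (Fin ℓ))
    (j : Fin ℓ) : (∑ k ∈ s, f k) j = ∑ k ∈ s, f k j := by
  induction s using Finset.induction with
  | empty => rfl
  | insert x s h ih => rw [Finset.sum_insert h, Finset.sum_insert h, ← ih]; rfl

lemma mono_aux (f f' : ℝ → ℝ) (hf : ∀ t, HasDerivAt f (f' t) t)
    (h0 : ∀ t ∈ Set.Icc (0:ℝ) 1, 0 ≤ f' t) : ∀ t ∈ Set.Icc (0:ℝ) 1, f 0 ≤ f t := by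
  intro t ht
  have hmono := monotoneOn_of_deriv_nonneg (convex_Icc (0:ℝ) 1)
    (fun s _ => (hf s).continuousAt.continuousWithinAt)
    (fun s _ => (hf s).differentiableAt.differentiableWithinAt)
    (fun s hs => by rw [(hf s).deriv]; exact h0 s (interior_subset hs))
  exact hmono ⟨le_rfl, zero_le_one⟩ ht ht.1

theorem taylor_lower {E : Type*} [NormedAddCommGroup E] [NormedSpace ℝ E]
    (j : E → ℝ) (hj : ContDiff ℝ 2 j) (u : E) {ε : ℝ} (hε : 0 < ε) :
    ∃ δ > 0, ∀ v : E, ‖v‖ ≤ δ →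
      j u + fderiv ℝ j u v + (1/2) * fderiv ℝ (fderiv ℝ j) u v v - ε * ‖v‖^2 ≤ j (u + v) := by
  have hj1 : ContDiff ℝ 1 (fderiv ℝ j) := (hj.fderiv_right (m := 1) (by norm_num))
  have hcont : Continuous (fderiv ℝ (fderiv ℝ j)) := hj1.continuous_fderiv (by norm_num)
  have hder1 : ∀ x, HasFDerivAt j (fderiv ℝ j x) x :=
    fun x => (hj.differentiable (by norm_num) x).hasFDerivAt
  have hder2 : ∀ x, HasFDerivAt (fderiv ℝ j) (fderiv ℝ (fderiv ℝ j) x) x :=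
    fun x => (hj1.differentiable (by norm_num) x).hasFDerivAt
  obtain ⟨δ', hδ', hδ⟩ := (Metric.continuousAt_iff (f := fderiv ℝ (fderiv ℝ j)) (a := u)).1 hcont.continuousAt ε hε
  refine ⟨δ'/2, by positivity, fun v hv => ?_⟩
  set K : ℝ := fderiv ℝ (fderiv ℝ j) u v v - ε * ‖v‖^2 with hKdef
  have hQ : ∀ t : ℝ, t ∈ Set.Icc (0:ℝ) 1 →
      K ≤ fderiv ℝ (fderiv ℝ j) (u + t • v) v v := by
    intro t ht
    have hdist : dist (u + t • v) u < δ' := by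
      rw [dist_eq_norm, add_sub_cancel_left, norm_smul, Real.norm_eq_abs]
      have h1 : |t| ≤ 1 := abs_le.2 ⟨by linarith [ht.1], ht.2⟩
      calc |t| * ‖v‖ ≤ 1 * (δ'/2) :=
            mul_le_mul h1 hv (norm_nonneg _) zero_le_one
        _ < δ' := by linarith
    have hnd := hδ hdist
    replace hnd : ‖fderiv ℝ (fderiv ℝ j) (u + t • v) - fderiv ℝ (fderiv ℝ j) u‖ < ε := by
      exact lt_of_eq_of_lt (dist_eq_norm (fderiv ℝ (fderiv ℝ j) (u + t • v)) (fderiv ℝ (fderiv ℝ j) u)).symm hnd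
    have hb : ‖((fderiv ℝ (fderiv ℝ j) (u + t • v) - fderiv ℝ (fderiv ℝ j) u) v) v‖ ≤ ε * ‖v‖^2 := by
      calc ‖((fderiv ℝ (fderiv ℝ j) (u + t • v) - fderiv ℝ (fderiv ℝ j) u) v) v‖
          ≤ ‖(fderiv ℝ (fderiv ℝ j) (u + t • v) - fderiv ℝ (fderiv ℝ j) u) v‖ * ‖v‖ :=
            ContinuousLinearMap.le_opNorm _ _
        _ ≤ (‖fderiv ℝ (fderiv ℝ j) (u + t • v) - fderiv ℝ (fderiv ℝ j) u‖ * ‖v‖) * ‖v‖ :=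
            mul_le_mul_of_nonneg_right (ContinuousLinearMap.le_opNorm _ _) (norm_nonneg _)
        _ ≤ (ε * ‖v‖) * ‖v‖ :=
            mul_le_mul_of_nonneg_right
              (mul_le_mul_of_nonneg_right hnd.le (norm_nonneg _)) (norm_nonneg _)
        _ = ε * ‖v‖^2 := by ring
    rw [Real.norm_eq_abs] at hb
    have hb' := (abs_le.1 hb).1
    simp only [ContinuousLinearMap.sub_apply, ContinuousLinearMap.coe_sub', Pi.sub_apply] at hb'
    simp only [hKdef]
    linarith
  set g : ℝ → ℝ := fun t => j (u + t • v) with hgdef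
  set h : ℝ → ℝ := fun t => fderiv ℝ j (u + t • v) v with hhdef
  have hpath : ∀ t : ℝ, HasDerivAt (fun s : ℝ => u + s • v) v t := by
    intro t
    simpa using ((hasDerivAt_id t).smul_const v).const_add u
  have hg : ∀ t : ℝ, HasDerivAt g (h t) t :=
    fun t => (hder1 (u + t • v)).comp_hasDerivAt t (hpath t)
  have hh : ∀ t : ℝ, HasDerivAt h (fderiv ℝ (fderiv ℝ j) (u + t • v) v v) t := by
    intro t
    have h1 : HasDerivAt (fun s : ℝ => fderiv ℝ j (u + s • v))
        (fderiv ℝ (fderiv ℝ j) (u + t • v) v) t :=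
      (hder2 (u + t • v)).comp_hasDerivAt t (hpath t)
    simpa using h1.clm_apply (hasDerivAt_const t v)
  have step1 : ∀ t ∈ Set.Icc (0:ℝ) 1, h 0 + K * t ≤ h t := by
    have haux : ∀ s : ℝ, HasDerivAt (fun s => h s - K * s)
        (fderiv ℝ (fderiv ℝ j) (u + s • v) v v - K) s := by
      intro s
      exact ((hh s).sub ((hasDerivAt_id s).const_mul K)).congr_deriv (by simp)
    intro t ht
    have := mono_aux _ _ haux (fun s hs => sub_nonneg.2 (hQ s hs)) t ht
    simp only [mul_zero, sub_zero] at this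
    linarith
  have step2 : g 0 + h 0 + K/2 ≤ g 1 := by
    have hder : ∀ t : ℝ, HasDerivAt (fun t => g t - h 0 * t - K/2 * (t*t))
        (h t - h 0 - K/2 * (t + t)) t := by
      intro t
      have hlin : HasDerivAt (fun t : ℝ => h 0 * t) (h 0) t := by
        simpa using (hasDerivAt_id t).const_mul (h 0)
      have hsq : HasDerivAt (fun t : ℝ => K/2 * (t*t)) (K/2 * (t+t)) t := by
        simpa using ((hasDerivAt_id t).mul (hasDerivAt_id t)).const_mul (K/2)
      exact ((hg t).sub hlin).sub hsq
    have := mono_aux _ _ hder (fun t ht => by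
      have h1 := step1 t ht
      show (0:ℝ) ≤ h t - h 0 - K/2 * (t+t)
      have h2 : K / 2 * (t + t) = K * t := by ring
      rw [h2]
      linarith)
    have h01 := this 1 ⟨zero_le_one, le_rfl⟩
    simp only [mul_zero, mul_one, sub_zero, zero_mul] at h01 ⊢
    linarith
  have hg0 : g 0 = j u := by simp [hgdef]
  have hg1 : g 1 = j (u + v) := by simp [hgdef]
  have hh0 : h 0 = fderiv ℝ j u v := by simp [hhdef]
  rw [hg0, hg1, hh0] at step2
  simp only [hKdef] at step2
  have hx : 0 ≤ ε * ‖v‖^2 := by positivity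
  linarith



lemma cone_coercive {ℓ : ℕ} (Q : EuclideanSpace ℝ (Fin ℓ) →L[ℝ] EuclideanSpace ℝ (Fin ℓ) →L[ℝ] ℝ)
    (C : Set (EuclideanSpace ℝ (Fin ℓ))) (hclosed : IsClosed C)
    (hscale : ∀ (r : ℝ), 0 ≤ r → ∀ w ∈ C, r • w ∈ C)
    (hpos : ∀ w ∈ C, w ≠ 0 → 0 < Q w w) :
    ∃ η > 0, ∀ w ∈ C, η * ‖w‖^2 ≤ Q w w := by
  have hsq : ∀ (w : EuclideanSpace ℝ (Fin ℓ)) (r : ℝ), Q (r • w) (r • w) = r^2 * Q w w := by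
    intro w r
    rw [map_smul]
    simp [smul_eq_mul]
    ring
  set S : Set (EuclideanSpace ℝ (Fin ℓ)) := C ∩ Metric.sphere 0 1 with hS
  by_cases hSnon : S.Nonempty
  · have hcomp : IsCompact S := (isCompact_sphere (0 : EuclideanSpace ℝ (Fin ℓ)) 1).inter_left hclosed
    have hcont : Continuous (fun w : EuclideanSpace ℝ (Fin ℓ) => Q w w) :=
      Q.continuous.clm_apply continuous_id
    obtain ⟨w₀, hw₀S, hw₀min⟩ := hcomp.exists_isMinOn hSnon hcont.continuousOn
    have hw₀n : ‖w₀‖ = 1 := by simpa using hw₀S.2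
    have hw₀0 : w₀ ≠ 0 := by
      intro h
      rw [h] at hw₀n
      simp at hw₀n
    have hη : 0 < Q w₀ w₀ := hpos w₀ hw₀S.1 hw₀0
    refine ⟨Q w₀ w₀, hη, fun w hw => ?_⟩
    by_cases hw0 : w = 0
    · simp [hw0]
    · have hnw : (0:ℝ) < ‖w‖ := norm_pos_iff.2 hw0
      set wu : EuclideanSpace ℝ (Fin ℓ) := ‖w‖⁻¹ • w with hwu
      have hwuS : wu ∈ S := by
        constructor
        · exact hscale _ (by positivity) w hw
        · simp only [Metric.mem_sphere, dist_zero_right]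
          rw [hwu, norm_smul, norm_inv, norm_norm]
          field_simp
      have hmin : Q w₀ w₀ ≤ Q wu wu := hw₀min hwuS
      have hrec : w = ‖w‖ • wu := by
        rw [hwu, smul_smul]
        field_simp
        simp
      calc Q w₀ w₀ * ‖w‖^2 = ‖w‖^2 * Q wu wu - ‖w‖^2 * (Q wu wu - Q w₀ w₀) := by ring
        _ ≤ ‖w‖^2 * Q wu wu := by nlinarith [hmin, sq_nonneg ‖w‖]
        _ = Q w w := by rw [← hsq wu ‖w‖, ← hrec]
  · refine ⟨1, one_pos, fun w hw => ?_⟩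
    by_cases hw0 : w = 0
    · simp [hw0]
    · exfalso
      apply hSnon
      have hnw : (0:ℝ) < ‖w‖ := norm_pos_iff.2 hw0
      refine ⟨‖w‖⁻¹ • w, hscale _ (by positivity) w hw, ?_⟩
      simp only [Metric.mem_sphere, dist_zero_right]
      rw [norm_smul, norm_inv, norm_norm]
      field_simp

lemma case1_arith (τ c n M η Dv Qvv : ℝ) (hτ : 0 < τ) (hc : 0 < c) (hη : 0 < η)
    (hM : 0 ≤ M) (hn : 0 ≤ n)
    (h1 : τ*(c*n) ≤ Dv) (h2 : -(M*n*n) ≤ Qvv) (h3 : (n*(M+η+1))*n ≤ (τ*c)*n) :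
    η/8/4 * n^2 ≤ Dv + 1/2*Qvv - η/32*n^2 := by
  nlinarith [mul_nonneg (mul_nonneg hM hn) hn, mul_nonneg (mul_nonneg hη.le hn) hn,
    mul_nonneg hn hn]

lemma case2_arith (c n n1 n2 M η Dv Q11 Q12 Q21 Q22 : ℝ) (hc : 0 < c) (hc2 : c ≤ 1/4)
    (hη : 0 < η) (hM : 0 ≤ M) (hn : 0 ≤ n) (hn1 : 0 ≤ n1) (hn2 : 0 ≤ n2)
    (hc3 : c * (20*(M+1)) ≤ η)
    (hD : 0 ≤ Dv)
    (hcn : n2 ≤ c*n) (h1u : n1 ≤ 2*n) (h1l : (1-c)*n ≤ n1)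
    (hQ1 : η * ((1-c)*n)^2 ≤ Q11)
    (hx1 : -(M * (2*n) * (c*n)) ≤ Q12)
    (hx2 : -(M * (c*n) * (2*n)) ≤ Q21)
    (hx3 : -(M * (c*n) * (c*n)) ≤ Q22) :
    η/8/4 * n^2 ≤ Dv + 1/2*(Q11 + (Q12 + Q21 + Q22)) - η/32*n^2 := by
  have key : η/4 + (5*(M*c) + 2*(η*c)) ≤ η := by nlinarith [mul_pos hη hc]
  nlinarith [mul_nonneg (mul_nonneg hη.le (mul_nonneg hc.le hc.le)) (mul_nonneg hn hn),
    sq_nonneg n, mul_nonneg hn hn, sq_nonneg (c*n),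
    mul_le_mul_of_nonneg_right key (mul_nonneg hn hn),
    mul_nonneg (mul_nonneg hM hc.le) (mul_nonneg hn hn)]

set_option maxHeartbeats 4000000 in
theorem second_order_sufficient_condition (ℓ : ℕ)
    (a b : EuclideanSpace ℝ (Fin ℓ)) (hab : ∀ k, a k < b k)
    (j : EuclideanSpace ℝ (Fin ℓ) → ℝ) (hj : ContDiff ℝ 2 j)
    (u_star : EuclideanSpace ℝ (Fin ℓ))
    (hmem : ∀ k, a k ≤ u_star k ∧ u_star k ≤ b k)
    (hfoc : ∀ u : EuclideanSpace ℝ (Fin ℓ), (∀ k, a k ≤ u k ∧ u k ≤ b k) →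
      0 ≤ fderiv ℝ j u_star (u - u_star))
    (hsoc : ∀ v : EuclideanSpace ℝ (Fin ℓ), v ≠ 0 →
      (∀ k, (u_star k = a k → 0 ≤ v k) ∧ (u_star k = b k → v k ≤ 0) ∧
        (fderiv ℝ j u_star (EuclideanSpace.single k 1) ≠ 0 → v k = 0)) →
      0 < fderiv ℝ (fderiv ℝ j) u_star v v) :
    ∃ η > 0, ∃ δ > 0, ∀ u : EuclideanSpace ℝ (Fin ℓ),
      (∀ k, a k ≤ u k ∧ u k ≤ b k) → ‖u - u_star‖ ≤ δ →
      j u_star + η / 4 * ‖u - u_star‖ ^ 2 ≤ j u := by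
  classical
  set D := fderiv ℝ j u_star with hD
  set Q := fderiv ℝ (fderiv ℝ j) u_star with hQdef
  set gD : Fin ℓ → ℝ := fun k => D (EuclideanSpace.single k 1) with hgD
  -- representation of D
  have hrep : ∀ w : EuclideanSpace ℝ (Fin ℓ), w = ∑ k, w k • EuclideanSpace.single k 1 := by
    intro w
    ext i
    rw [piLp_sum_apply]
    simp [EuclideanSpace.single_apply]
  have hDsum : ∀ w : EuclideanSpace ℝ (Fin ℓ), D w = ∑ k, w k * gD k := by
    intro w
    conv_lhs => rw [hrep w]
    rw [map_sum]
    simp [hgD]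
  -- first order per-component consequences
  have hadm : ∀ (k : Fin ℓ) (c : ℝ), a k ≤ c → c ≤ b k → 0 ≤ (c - u_star k) * gD k := by
    intro k c hc1 hc2
    set uu : EuclideanSpace ℝ (Fin ℓ) :=
      u_star + (c - u_star k) • EuclideanSpace.single k 1 with huu
    have hadm' : ∀ i, a i ≤ uu i ∧ uu i ≤ b i := by
      intro i
      have happ : uu i = u_star i + (c - u_star k) * (EuclideanSpace.single k (1:ℝ)) i := rfl
      rw [happ, EuclideanSpace.single_apply]
      by_cases hik : i = k
      · subst hik; simp; constructor <;> linarith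
      · simp [hik]; exact hmem i
    have h := hfoc uu hadm'
    have hsub : uu - u_star = (c - u_star k) • EuclideanSpace.single k 1 := by
      rw [huu]; abel
    rw [hsub, map_smul, smul_eq_mul] at h
    have hgk : gD k = D (EuclideanSpace.single k 1) := rfl
    rw [← hgk] at h
    exact h
  -- index set of nonzero gradient components
  set I : Finset (Fin ℓ) := Finset.univ.filter (fun k => gD k ≠ 0) with hI
  have hmemI : ∀ k, k ∈ I ↔ gD k ≠ 0 := by
    intro k; simp [hI]
  obtain ⟨τ, hτpos, hτle⟩ : ∃ τ > 0, ∀ k ∈ I, τ ≤ |gD k| := by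
    by_cases hInon : I.Nonempty
    · refine ⟨I.inf' hInon (fun k => |gD k|), ?_, fun k hk => Finset.inf'_le _ hk⟩
      rw [gt_iff_lt, Finset.lt_inf'_iff]
      intro k hk
      exact abs_pos.2 ((hmemI k).1 hk)
    · exact ⟨1, one_pos, fun k hk => absurd ⟨k, hk⟩ hInon⟩
  -- coercivity on the critical cone
  clear_value gD Q D
  set C : Set (EuclideanSpace ℝ (Fin ℓ)) :=
    {w | ∀ k, (u_star k = a k → 0 ≤ w k) ∧ (u_star k = b k → w k ≤ 0) ∧
      (gD k ≠ 0 → w k = 0)} with hC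
  obtain ⟨η, hηpos, hcoer⟩ : ∃ η > 0, ∀ w ∈ C, η * ‖w‖^2 ≤ Q w w := by
    apply cone_coercive
    · have hCeq : C = ⋂ k, ({w : EuclideanSpace ℝ (Fin ℓ) | u_star k = a k → 0 ≤ w k} ∩
          ({w : EuclideanSpace ℝ (Fin ℓ) | u_star k = b k → w k ≤ 0} ∩
           {w : EuclideanSpace ℝ (Fin ℓ) | gD k ≠ 0 → w k = 0})) := by
        ext w
        simp only [hC, Set.mem_setOf_eq, Set.mem_iInter, Set.mem_inter_iff]
      rw [hCeq]
      apply isClosed_iInter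
      intro k
      have hcontk : Continuous (fun w : EuclideanSpace ℝ (Fin ℓ) => w k) :=
        (EuclideanSpace.proj k).continuous
      refine IsClosed.inter ?_ (IsClosed.inter ?_ ?_)
      · by_cases h : u_star k = a k
        · have he : {w : EuclideanSpace ℝ (Fin ℓ) | u_star k = a k → 0 ≤ w k}
              = {w : EuclideanSpace ℝ (Fin ℓ) | 0 ≤ w k} := by ext w; simp [h]
          rw [he]; exact isClosed_le continuous_const hcontk
        · have he : {w : EuclideanSpace ℝ (Fin ℓ) | u_star k = a k → 0 ≤ w k} = Set.univ := by
            ext w; simp [h]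
          rw [he]; exact isClosed_univ
      · by_cases h : u_star k = b k
        · have he : {w : EuclideanSpace ℝ (Fin ℓ) | u_star k = b k → w k ≤ 0}
              = {w : EuclideanSpace ℝ (Fin ℓ) | w k ≤ 0} := by ext w; simp [h]
          rw [he]; exact isClosed_le hcontk continuous_const
        · have he : {w : EuclideanSpace ℝ (Fin ℓ) | u_star k = b k → w k ≤ 0} = Set.univ := by
            ext w; simp [h]
          rw [he]; exact isClosed_univ
      · by_cases h : gD k ≠ 0
        · have he : {w : EuclideanSpace ℝ (Fin ℓ) | gD k ≠ 0 → w k = 0}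
              = {w : EuclideanSpace ℝ (Fin ℓ) | w k = 0} := by ext w; simp [h]
          rw [he]; exact isClosed_eq hcontk continuous_const
        · have he : {w : EuclideanSpace ℝ (Fin ℓ) | gD k ≠ 0 → w k = 0} = Set.univ := by
            ext w; simp [h]
          rw [he]; exact isClosed_univ
    · intro r hr w hw k
      obtain ⟨h1, h2, h3⟩ := hw k
      have happ : (r • w : EuclideanSpace ℝ (Fin ℓ)) k = r * w k := rfl
      refine ⟨fun ha => ?_, fun hb => ?_, fun hg => ?_⟩
      · rw [happ]; exact mul_nonneg hr (h1 ha)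
      · rw [happ]; exact mul_nonpos_of_nonneg_of_nonpos hr (h2 hb)
      · rw [happ, h3 hg, mul_zero]
    · intro w hw hw0
      apply hsoc w hw0
      intro k
      obtain ⟨h1, h2, h3⟩ := hw k
      refine ⟨h1, h2, fun hg => h3 ?_⟩
      simp only [hgD]
      exact hg
  obtain ⟨M, hMeq⟩ : ∃ M : ℝ, M = ‖Q‖ := ⟨_, rfl⟩
  have hM0 : 0 ≤ M := by rw [hMeq]; exact norm_nonneg Q
  have hQb : ∀ x y : EuclideanSpace ℝ (Fin ℓ), |Q x y| ≤ M * ‖x‖ * ‖y‖ := by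
    intro x y
    calc |Q x y| = ‖Q x y‖ := (Real.norm_eq_abs _).symm
      _ ≤ ‖Q x‖ * ‖y‖ := ContinuousLinearMap.le_opNorm _ _
      _ ≤ (M * ‖x‖) * ‖y‖ := by
          rw [hMeq]
          exact mul_le_mul_of_nonneg_right (ContinuousLinearMap.le_opNorm _ _) (norm_nonneg _)
      _ = M * ‖x‖ * ‖y‖ := by ring
  obtain ⟨c, hceq⟩ : ∃ c : ℝ, c = min (1/4) (η/(20*(M+1))) := ⟨_, rfl⟩
  have hMpos : (0:ℝ) < 20*(M+1) := by positivity
  have hc1 : 0 < c := by rw [hceq]; exact lt_min (by norm_num) (by positivity)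
  have hc2 : c ≤ 1/4 := by rw [hceq]; exact min_le_left _ _
  have hc3 : c * (20*(M+1)) ≤ η := by
    have h := min_le_right (1/4) (η/(20*(M+1)))
    rw [← hceq] at h
    exact (le_div_iff₀ hMpos).1 h
  obtain ⟨δε, hδεpos, hT⟩ := taylor_lower j hj u_star (show (0:ℝ) < η/32 by positivity)
  refine ⟨η/8, by positivity, min δε (τ*c/(M+η+1)), by positivity, fun u hu hnδ => ?_⟩
  set v : EuclideanSpace ℝ (Fin ℓ) := u - u_star with hv
  set n : ℝ := ‖v‖ with hn
  have hn0 : 0 ≤ n := norm_nonneg _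
  have hnδε : n ≤ δε := le_trans hnδ (min_le_left _ _)
  have hnδ2 : n ≤ τ*c/(M+η+1) := le_trans hnδ (min_le_right _ _)
  have hδ2n : n * (M+η+1) ≤ τ*c := (le_div_iff₀ (by positivity)).1 hnδ2
  -- Taylor estimate
  have hT' := hT v hnδε
  have huv : u_star + v = u := by rw [hv]; abel
  rw [huv] at hT'
  rw [← hD, ← hQdef, ← hn] at hT'
  -- decomposition
  set v2 : EuclideanSpace ℝ (Fin ℓ) := ∑ k ∈ I, v k • EuclideanSpace.single k 1 with hv2
  set v1 : EuclideanSpace ℝ (Fin ℓ) := v - v2 with hv1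
  have hv2app : ∀ i, v2 i = if i ∈ I then v i else 0 := by
    intro i
    rw [hv2, piLp_sum_apply]
    have : ∀ k ∈ I, (v k • EuclideanSpace.single k (1:ℝ)) i
        = if i = k then v k else 0 := by
      intro k _
      have : (v k • EuclideanSpace.single k (1:ℝ)) i
          = v k * (EuclideanSpace.single k (1:ℝ)) i := rfl
      rw [this, EuclideanSpace.single_apply]
      by_cases h : i = k <;> simp [h]
    rw [Finset.sum_congr rfl this, Finset.sum_ite_eq]
  have hv1app : ∀ i, v1 i = v i - v2 i := fun i => rfl
  have hvapp : ∀ i, v i = u i - u_star i := fun i => rfl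
  clear_value v1 v2 v
  -- cone membership of v1
  have hv1cone : v1 ∈ C := by
    intro k
    by_cases hk : k ∈ I
    · have h0 : v1 k = 0 := by rw [hv1app, hv2app]; simp [hk]
      exact ⟨fun _ => by rw [h0], fun _ => by rw [h0], fun _ => h0⟩
    · have h0 : v1 k = v k := by rw [hv1app, hv2app]; simp [hk]
      refine ⟨fun ha => ?_, fun hb => ?_, fun hg => absurd ((hmemI k).2 hg) hk⟩
      · rw [h0, hvapp, ha]; linarith [(hu k).1]
      · rw [h0, hvapp, hb]; linarith [(hu k).2]
  -- norm bounds
  have hn2 : ‖v2‖ ≤ ∑ k ∈ I, |v k| := by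
    rw [hv2]
    calc ‖∑ k ∈ I, v k • EuclideanSpace.single k (1:ℝ)‖
        ≤ ∑ k ∈ I, ‖v k • EuclideanSpace.single k (1:ℝ)‖ := norm_sum_le _ _
      _ = ∑ k ∈ I, |v k| := by
          apply Finset.sum_congr rfl
          intro k _
          rw [norm_smul, EuclideanSpace.norm_single, norm_one, mul_one, Real.norm_eq_abs]
  -- lower bound on D v
  have hDlow : τ * ‖v2‖ ≤ D v := by
    have hDrep : D v = ∑ k ∈ I, v k * gD k := by
      rw [hDsum v]
      rw [← Finset.sum_filter_add_sum_filter_not Finset.univ (fun k => gD k ≠ 0)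
        (fun k => v k * gD k)]
      rw [← hI]
      have hz : ∑ k ∈ Finset.univ.filter (fun k => ¬ gD k ≠ 0), v k * gD k = 0 := by
        apply Finset.sum_eq_zero
        intro k hk
        have : gD k = 0 := not_not.1 (Finset.mem_filter.1 hk).2
        rw [this, mul_zero]
      rw [hz, add_zero]
    have hterm : ∀ k ∈ I, τ * |v k| ≤ v k * gD k := by
      intro k hk
      have hgk : gD k ≠ 0 := (hmemI k).1 hk
      have hτk := hτle k hk
      rcases lt_or_gt_of_ne hgk with hneg | hpos
      · have h0 := hadm k (b k) (hab k).le le_rfl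
        have hub : u_star k ≤ b k := (hmem k).2
        have heq : u_star k = b k := le_antisymm hub (by nlinarith)
        have hvk : v k ≤ 0 := by rw [hvapp, heq]; linarith [(hu k).2]
        have habs : |gD k| = -gD k := abs_of_neg hneg
        have habsv : |v k| = -v k := abs_of_nonpos hvk
        rw [habs] at hτk
        rw [habsv]
        have := mul_le_mul_of_nonneg_right hτk (neg_nonneg.2 hvk)
        nlinarith [this]
      · have h0 := hadm k (a k) le_rfl (hab k).le
        have hlb : a k ≤ u_star k := (hmem k).1
        have heq : u_star k = a k := le_antisymm (by nlinarith) hlb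
        have hvk : 0 ≤ v k := by rw [hvapp, heq]; linarith [(hu k).1]
        have habs : |gD k| = gD k := abs_of_pos hpos
        have habsv : |v k| = v k := abs_of_nonneg hvk
        rw [habs] at hτk
        rw [habsv]
        have := mul_le_mul_of_nonneg_right hτk hvk
        nlinarith [this]
    calc τ * ‖v2‖ ≤ τ * ∑ k ∈ I, |v k| := mul_le_mul_of_nonneg_left hn2 hτpos.le
      _ = ∑ k ∈ I, τ * |v k| := Finset.mul_sum _ _ _
      _ ≤ ∑ k ∈ I, v k * gD k := Finset.sum_le_sum hterm
      _ = D v := hDrep.symm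
  have hD0 : 0 ≤ D v := by rw [hv]; exact hfoc u hu
  -- case analysis
  rcases le_total (c * n) ‖v2‖ with hcase | hcase
  · -- large "strongly active" part
    have h1 : τ * (c * n) ≤ D v := le_trans (mul_le_mul_of_nonneg_left hcase hτpos.le) hDlow
    have h2 : -(M * n * n) ≤ Q v v := by
      have := (abs_le.1 (hQb v v)).1
      rw [← hn] at this
      linarith
    have h3 : (n * (M+η+1)) * n ≤ (τ*c) * n := mul_le_mul_of_nonneg_right hδ2n hn0
    have hMn : 0 ≤ M * n * n := by positivity
    have hηn : 0 ≤ η * (n * n) := by positivity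
    have hnn : 0 ≤ n * n := by positivity
    have hgoal := case1_arith τ c n M η (D v) (Q v v) hτpos hc1 hηpos hM0 hn0 h1 h2 h3
    linarith [hT']
  · -- small "strongly active" part: use coercivity
    set n2 : ℝ := ‖v2‖ with hn2def
    set n1 : ℝ := ‖v1‖ with hn1def
    have hn10 : 0 ≤ n1 := norm_nonneg _
    have hn20 : 0 ≤ n2 := norm_nonneg _
    have hvsum : v = v1 + v2 := by rw [hv1]; abel
    have htri1 : n ≤ n1 + n2 := by rw [hn, hvsum]; exact norm_add_le _ _
    have htri2 : n1 ≤ n + n2 := by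
      rw [hn1def, hv1]
      calc ‖v - v2‖ ≤ ‖v‖ + ‖v2‖ := norm_sub_le _ _
        _ = n + n2 := by rw [hn, hn2def]
    have hsplit : Q v v = Q v1 v1 + (Q v1 v2 + Q v2 v1 + Q v2 v2) := by
      rw [hvsum]
      simp only [map_add, ContinuousLinearMap.add_apply]
      ring
    have hcoQ : η * n1^2 ≤ Q v1 v1 := hcoer v1 hv1cone
    have hcn : n2 ≤ c * n := hcase
    have hcnn : c * n ≤ (1/4) * n := mul_le_mul_of_nonneg_right hc2 hn0
    have hn1u : n1 ≤ 2*n := by linarith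
    have hn1l : (1-c)*n ≤ n1 := by linarith
    have hx1 : -(M * (2*n) * (c*n)) ≤ Q v1 v2 := by
      have h1 := (abs_le.1 (hQb v1 v2)).1
      have h2 : M * n1 * n2 ≤ M * (2*n) * (c*n) := by
        apply mul_le_mul (mul_le_mul_of_nonneg_left hn1u hM0) hcn hn20 (by positivity)
      linarith
    have hx2 : -(M * (c*n) * (2*n)) ≤ Q v2 v1 := by
      have h1 := (abs_le.1 (hQb v2 v1)).1
      have h2 : M * n2 * n1 ≤ M * (c*n) * (2*n) := by
        apply mul_le_mul (mul_le_mul_of_nonneg_left hcn hM0) hn1u hn10 (by positivity)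
      linarith
    have hx3 : -(M * (c*n) * (c*n)) ≤ Q v2 v2 := by
      have h1 := (abs_le.1 (hQb v2 v2)).1
      have h2 : M * n2 * n2 ≤ M * (c*n) * (c*n) := by
        apply mul_le_mul (mul_le_mul_of_nonneg_left hcn hM0) hcn hn20 (by positivity)
      linarith
    have hQ1 : η * ((1-c)*n)^2 ≤ Q v1 v1 := by
      have hp : ((1-c)*n)^2 ≤ n1^2 := by
        apply pow_le_pow_left₀ (mul_nonneg (by linarith) hn0) hn1l
      calc η * ((1-c)*n)^2 ≤ η * n1^2 := mul_le_mul_of_nonneg_left hp hηpos.le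
        _ ≤ Q v1 v1 := hcoQ
    have hgoal := case2_arith c n n1 n2 M η (D v) (Q v1 v1) (Q v1 v2) (Q v2 v1) (Q v2 v2)
      hc1 hc2 hηpos hM0 hn0 hn10 hn20 hc3 hD0 hcn hn1u hn1l hQ1 hx1 hx2 hx3
    linarith [hT', hgoal, hsplit]
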